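/- In the setting of the previous statement, the derivation ∂_e of K[P] given by ∂_e(χ^m) = ⟨m, v_j⟩ χ^{m+e} is locally nilpotent: for every m ∈ P, ∂_e^n(χ^m) = 0 for all n > ⟨m, v_j⟩. More precisely, ∂_e^n(χ^m) = ⟨m,v_j⟩·(⟨m,v_j⟩−1)⋯(⟨m,v_j⟩−n+1) · χ^{m+ne}. -/

import Mathlib

open AddMonoidAlgebra

/-- The root derivation `∂_e` is locally nilpotent:
`∂_e^n(χ^m) = ⟨m,v_j⟩(⟨m,v_j⟩-1)⋯(⟨m,v_j⟩-n+1) χ^{m+ne}`, which vanishes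
once `n > ⟨m, v_j⟩`. -/
theorem demazure_root_derivation_locally_nilpotent
    {K : Type*} [Field K] [CharZero K]
    {M : Type*} [AddCommGroup M] [Module.Free ℤ M] [Module.Finite ℤ M]
    {k : ℕ} (v : Fin k → (M →ₗ[ℤ] ℤ)) (j : Fin k) (e : M)
    (he₁ : v j e = -1) (he₂ : ∀ i ≠ j, 0 ≤ v i e)
    (P : AddSubmonoid M) (hP : ∀ m : M, m ∈ P ↔ ∀ i, 0 ≤ v i m)
    (D : AddMonoidAlgebra K P →ₗ[K] AddMonoidAlgebra K P)
    (hD : ∀ m : P,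
        (v j (m : M) = 0 → D (AddMonoidAlgebra.single m 1) = 0) ∧
        (∀ h : (m : M) + e ∈ P,
          D (AddMonoidAlgebra.single m 1)
            = ((v j (m : M) : K)) • AddMonoidAlgebra.single (⟨(m : M) + e, h⟩ : P) (1 : K)))
    (hleib : ∀ a b : AddMonoidAlgebra K P, D (a * b) = a * D b + b * D a) :
    ∀ (m : P) (n : ℕ),
      (∀ h : (m : M) + n • e ∈ P,
        (⇑D)^[n] (AddMonoidAlgebra.single m 1)
          = (∏ i ∈ Finset.range n, (((v j (m : M) : K)) - (i : K))) •
              AddMonoidAlgebra.single (⟨(m : M) + n • e, h⟩ : P) (1 : K)) ∧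
      ((v j (m : M)) < (n : ℤ) → (⇑D)^[n] (AddMonoidAlgebra.single m 1) = 0) := by

  have hsmul : ∀ (n : ℕ) (c : K) (x : AddMonoidAlgebra K P),
      (⇑D)^[n] (c • x) = c • (⇑D)^[n] x := by
    intro n c x
    rw [← Module.End.pow_apply, ← Module.End.pow_apply, map_smul]
  intro m n
  induction n generalizing m with
  | zero =>
    constructor
    · intro h
      have key : (⟨(m : M) + (0 : ℕ) • e, h⟩ : P) = m := Subtype.ext (by simp)
      simp [key]
    · intro hlt
      have := (hP m).1 m.2 j
      omega
  | succ n ih =>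
    have ha : 0 ≤ v j (m : M) := (hP m).1 m.2 j
    rcases eq_or_lt_of_le ha with ha0 | hapos
    · -- v j m = 0
      have hD0 : D (AddMonoidAlgebra.single m 1) = 0 := (hD m).1 ha0.symm
      have hiter : (⇑D)^[n + 1] (AddMonoidAlgebra.single m 1) = 0 := by
        rw [Function.iterate_succ_apply, hD0, Function.iterate_fixed (map_zero D)]
      refine ⟨fun h => ?_, fun _ => hiter⟩
      rw [hiter, Finset.prod_eq_zero (Finset.mem_range.2 (Nat.succ_pos n))]
      · rw [zero_smul]
      · rw [← ha0]
        push_cast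
        ring
    · -- 0 < v j m
      have hme : (m : M) + e ∈ P := by
        rw [hP]
        intro i
        rw [map_add]
        by_cases hij : i = j
        · subst hij; rw [he₁]; omega
        · have h1 := he₂ i hij
          have h2 := (hP m).1 m.2 i
          omega
      set m' : P := ⟨(m : M) + e, hme⟩ with hm'
      have hvm' : v j (m' : M) = v j (m : M) - 1 := by
        simp only [hm', map_add, he₁]; ring
      have hDχ : D (AddMonoidAlgebra.single m 1)
          = ((v j (m : M) : K)) • AddMonoidAlgebra.single m' (1 : K) := (hD m).2 hme
      constructor
      · intro h
        have h' : (m' : M) + n • e ∈ P := by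
          have : (m' : M) + n • e = (m : M) + (n + 1) • e := by
            simp only [hm', succ_nsmul]
            abel
          rw [this]; exact h
        have key : (⟨(m' : M) + n • e, h'⟩ : P) = ⟨(m : M) + (n + 1) • e, h⟩ :=
          Subtype.ext (by simp only [hm', succ_nsmul]; abel)
        rw [Function.iterate_succ_apply, hDχ, hsmul, (ih m').1 h', key, smul_smul,
          Finset.prod_range_succ']
        congr 1
        rw [mul_comm]
        congr 1
        · apply Finset.prod_congr rfl
          intro i _
          rw [hvm']
          push_cast
          ring
        · norm_num
      · intro hlt
        have hlt' : v j (m' : M) < (n : ℤ) := by rw [hvm']; push_cast at hlt ⊢; omega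
        rw [Function.iterate_succ_apply, hDχ, hsmul, (ih m').2 hlt', smul_zero]
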